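/- Let n ≥ 2 be an integer decomposed as n = p₁ + p₂ with p₁, p₂ ≥ 2, and let ℓ ≥ 1 and M ≥ 0. Let δξ₁, δξ₂, δy₁, δy₂, δγ : [ℓ, ∞) → ℝ be continuous with |δξ_α(s)| ≤ M, |δy_α(s)| ≤ M s^{−1/2}, and |δγ(s)| ≤ M s for all s ≥ ℓ and α = 1, 2. Then for every s ≥ ℓ and each α: (i) |2(n−1) ∫_ℓ^s δy_α(ς) dς/ς| ≤ 4(n−1)M/√ℓ; (ii) √s · |∫_ℓ^s e^{(ς²−s²)/2} (δξ_α(ς) − (n−1)δy_α(ς) + δγ(ς)) dς/ς| ≤ 2(n+1)M/√ℓ; (iii) √s · |∫_s^∞ e^{(s²−ς²)/2} (δξ_α(ς) − (n−1)δy_α(ς) + δγ(ς)) dς/ς| ≤ (n+1)M/√ℓ; (iv) (1/s)·|2s ∫_ℓ^s (p₁ δy₁(ς) + p₂ δy₂(ς)) dς/ς²| ≤ (4n/3) M ℓ^{−3/2}. In particular, each of these linear integral operators has norm at most 4n/√ℓ with respect to the weighted sup norms ‖ξ‖₀ = sup|ξ|, ‖y‖_{1/2} = sup √s|y(s)|,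 ‖γ‖_{−1} = sup |γ(s)|/s. -/

import Mathlib

open MeasureTheory Set intervalIntegral
open scoped Interval

-- generic abs bound on Icc
private lemma abs_int_Icc_le {a b : ℝ} {f g : ℝ → ℝ}
    (hf : IntegrableOn f (Icc a b)) (hg : IntegrableOn g (Icc a b))
    (h : ∀ x ∈ Icc a b, |f x| ≤ g x) :
    |∫ x in Icc a b, f x| ≤ ∫ x in Icc a b, g x := by
  calc |∫ x in Icc a b, f x| ≤ ∫ x in Icc a b, |f x| := by
        simpa [Real.norm_eq_abs] using
          norm_integral_le_integral_norm (μ := volume.restrict (Icc a b)) f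
    _ ≤ ∫ x in Icc a b, g x := setIntegral_mono_on hf.abs hg measurableSet_Icc h

private lemma abs_int_Ici_le {a : ℝ} {f g : ℝ → ℝ}
    (hf : AEStronglyMeasurable f (volume.restrict (Ici a)))
    (hg : IntegrableOn g (Ici a))
    (h : ∀ x ∈ Ici a, |f x| ≤ g x) :
    |∫ x in Ici a, f x| ≤ ∫ x in Ici a, g x := by
  have hfi : IntegrableOn f (Ici a) := by
    refine hg.mono' hf ?_
    refine (ae_restrict_iff' measurableSet_Ici).2 (ae_of_all _ ?_)
    simpa [Real.norm_eq_abs] using h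
  calc |∫ x in Ici a, f x| ≤ ∫ x in Ici a, |f x| := by
        simpa [Real.norm_eq_abs] using
          norm_integral_le_integral_norm (μ := volume.restrict (Ici a)) f
    _ ≤ ∫ x in Ici a, g x := setIntegral_mono_on hfi.abs hg measurableSet_Ici h

-- rpow integral bound
private lemma int_rpow_le {ℓ s p : ℝ} (hℓ : 0 < ℓ) (hls : ℓ ≤ s) (hp : p < -1) :
    ∫ x in Icc ℓ s, x ^ p ≤ ℓ ^ (p + 1) / (-(p + 1)) := by
  have hs : 0 < s := lt_of_lt_of_le hℓ hls
  have h0 : (0:ℝ) ∉ [[ℓ, s]] := by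
    rw [Set.uIcc_of_le hls]
    exact fun h => absurd h.1 (by linarith)
  rw [MeasureTheory.integral_Icc_eq_integral_Ioc, ← integral_of_le hls,
    integral_rpow (Or.inr ⟨by linarith, h0⟩)]
  have h1 : (0:ℝ) ≤ s ^ (p + 1) := Real.rpow_nonneg hs.le _
  have h2 : p + 1 < 0 := by linarith
  have h3 : (s ^ (p + 1) - ℓ ^ (p + 1)) / (p + 1) = (ℓ ^ (p + 1) - s ^ (p + 1)) / (-(p + 1)) := by
    rw [div_neg, ← neg_div, neg_sub]
  rw [h3]
  gcongr
  · linarith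
  · linarith

private lemma int_exp_Icc_le {ℓ s : ℝ} (hs : 0 < s) (hls : ℓ ≤ s) :
    ∫ x in Icc ℓ s, Real.exp (s * (x - s) / 2) ≤ 2 / s := by
  have hkey : ∫ x in ℓ..s, Real.exp (s * (x - s) / 2)
      = (fun x => (2 / s) * Real.exp (s * (x - s) / 2)) s
        - (fun x => (2 / s) * Real.exp (s * (x - s) / 2)) ℓ := by
    refine intervalIntegral.integral_eq_sub_of_hasDerivAt
      (f := fun x => (2 / s) * Real.exp (s * (x - s) / 2))
      (f' := fun x => Real.exp (s * (x - s) / 2)) ?_ ?_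
    · intro x _
      have h1 : HasDerivAt (fun x : ℝ => s * (x - s) / 2) (s / 2) x := by
        simpa using (((hasDerivAt_id x).sub_const s).const_mul s).div_const 2
      have h2 := (h1.exp).const_mul (2 / s)
      refine h2.congr_deriv ?_
      field_simp
    · exact (Real.continuous_exp.comp (by continuity)).intervalIntegrable _ _
  rw [MeasureTheory.integral_Icc_eq_integral_Ioc, ← integral_of_le hls, hkey]
  have h1 : (0:ℝ) < Real.exp (s * (ℓ - s) / 2) := Real.exp_pos _
  have h2s : 0 < 2 / s := by positivity
  simp only [sub_self, mul_zero, zero_mul, zero_div, Real.exp_zero, mul_one]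
  nlinarith

private lemma int_exp_Ici {s : ℝ} (hs : 0 < s) :
    ∫ x in Ici s, Real.exp (-(s * (x - s))) = 1 / s := by
  rw [MeasureTheory.integral_Ici_eq_integral_Ioi]
  have hint : IntegrableOn (fun x => Real.exp (-(s * (x - s)))) (Ioi s) := by
    have h := (exp_neg_integrableOn_Ioi s hs).const_mul (Real.exp (s * s))
    refine h.congr ((MeasureTheory.ae_restrict_mem measurableSet_Ioi).mono (fun x _ => ?_))
    show Real.exp (s * s) * Real.exp (-s * x) = Real.exp (-(s * (x - s)))
    rw [← Real.exp_add]
    ring_nf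
  have hkey := integral_Ioi_of_hasDerivAt_of_tendsto
    (f := fun x => -(1/s) * Real.exp (-(s * (x - s))))
    (f' := fun x => Real.exp (-(s * (x - s)))) (a := s) (m := 0)
    ?_ ?_ hint ?_
  · rw [hkey]; simp
  · exact (continuous_const.mul (Real.continuous_exp.comp (by continuity))).continuousWithinAt
  · intro x _
    have h1 : HasDerivAt (fun x : ℝ => -(s * (x - s))) (-s) x := by
      have := (((hasDerivAt_id x).sub_const s).const_mul s).neg
      simp only [mul_one] at this
      exact this
    have h2 := (h1.exp).const_mul (-(1/s))
    refine h2.congr_deriv ?_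
    field_simp
  · have hin : Filter.Tendsto (fun x : ℝ => -(s * (x - s))) Filter.atTop Filter.atBot := by
      apply Filter.tendsto_neg_atTop_atBot.comp
      exact (Filter.tendsto_atTop_add_const_right _ (-s) Filter.tendsto_id).const_mul_atTop hs
    have := (Real.tendsto_exp_atBot.comp hin).const_mul (-(1/s))
    simpa using this

private lemma sqrt_inv_eq {ℓ : ℝ} (hℓ0 : 0 < ℓ) : ℓ ^ (-(1:ℝ)/2) = 1 / Real.sqrt ℓ := by
  rw [Real.sqrt_eq_rpow, one_div, ← Real.rpow_neg hℓ0.le]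
  norm_num

private lemma aux_i {ℓ M s : ℝ} (hℓ : 1 ≤ ℓ) (hM : 0 ≤ M) (hs : ℓ ≤ s)
    {δy : ℝ → ℝ} (hcy : ContinuousOn δy (Ici ℓ))
    (hby : ∀ t, ℓ ≤ t → |δy t| ≤ M * t ^ (-(1:ℝ)/2)) :
    |∫ ς in Icc ℓ s, δy ς / ς| ≤ 2 * M / Real.sqrt ℓ := by
  have hℓ0 : (0:ℝ) < ℓ := by linarith
  have hsub : Icc ℓ s ⊆ Ici ℓ := Icc_subset_Ici_self
  have hne : ∀ x ∈ Icc ℓ s, x ≠ 0 := fun x hx => by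
    have := hx.1; intro h; rw [h] at this; linarith
  have hf : IntegrableOn (fun ς => δy ς / ς) (Icc ℓ s) :=
    ((hcy.mono hsub).div continuousOn_id hne).integrableOn_Icc
  have hgc : ContinuousOn (fun x : ℝ => M * x ^ (-(3:ℝ)/2)) (Icc ℓ s) :=
    continuousOn_const.mul (continuousOn_id.rpow_const (fun x hx => Or.inl (hne x hx)))
  have hg : IntegrableOn (fun x : ℝ => M * x ^ (-(3:ℝ)/2)) (Icc ℓ s) := hgc.integrableOn_Icc
  have hb : ∀ x ∈ Icc ℓ s, |δy x / x| ≤ M * x ^ (-(3:ℝ)/2) := by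
    intro x hx
    have hx1 : 1 ≤ x := le_trans hℓ hx.1
    have hx0 : 0 < x := by linarith
    rw [abs_div, abs_of_pos hx0, div_le_iff₀ hx0]
    calc |δy x| ≤ M * x ^ (-(1:ℝ)/2) := hby x hx.1
      _ = M * x ^ (-(3:ℝ)/2) * x := by
          have h1 : x ^ (-(1:ℝ)/2) = x ^ ((-(3:ℝ)/2) + 1) := by norm_num
          rw [h1, Real.rpow_add_one hx0.ne']; ring
  calc |∫ ς in Icc ℓ s, δy ς / ς| ≤ ∫ x in Icc ℓ s, M * x ^ (-(3:ℝ)/2) :=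
        abs_int_Icc_le hf hg hb
    _ = M * ∫ x in Icc ℓ s, x ^ (-(3:ℝ)/2) := MeasureTheory.integral_const_mul _ _
    _ ≤ M * (ℓ ^ ((-(3:ℝ)/2) + 1) / (-((-(3:ℝ)/2) + 1))) := by
        have := int_rpow_le (p := -(3:ℝ)/2) hℓ0 hs (by norm_num)
        exact mul_le_mul_of_nonneg_left this hM
    _ = 2 * M / Real.sqrt ℓ := by
        have h1 : (-(3:ℝ)/2) + 1 = -(1:ℝ)/2 := by norm_num
        rw [h1, sqrt_inv_eq hℓ0]
        field_simp

private lemma aux_ii {ℓ C s : ℝ} (hℓ : 1 ≤ ℓ) (hC : 0 ≤ C) (hs : ℓ ≤ s)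
    {h : ℝ → ℝ} (hch : ContinuousOn h (Ici ℓ))
    (hbh : ∀ t, ℓ ≤ t → |h t| ≤ C * t) :
    Real.sqrt s * |∫ ς in Icc ℓ s, Real.exp ((ς ^ 2 - s ^ 2) / 2) * h ς / ς|
      ≤ 2 * C / Real.sqrt ℓ := by
  have hℓ0 : (0:ℝ) < ℓ := by linarith
  have hs0 : (0:ℝ) < s := by linarith
  have hsub : Icc ℓ s ⊆ Ici ℓ := Icc_subset_Ici_self
  have hne : ∀ x ∈ Icc ℓ s, x ≠ 0 := fun x hx => by
    have := hx.1; intro hh; rw [hh] at this; linarith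
  have hf : IntegrableOn (fun ς => Real.exp ((ς ^ 2 - s ^ 2) / 2) * h ς / ς) (Icc ℓ s) := by
    refine ContinuousOn.integrableOn_Icc ?_
    exact ((Real.continuous_exp.comp (by continuity)).continuousOn.mul (hch.mono hsub)).div
      continuousOn_id hne
  have hg : IntegrableOn (fun x : ℝ => C * Real.exp (s * (x - s) / 2)) (Icc ℓ s) :=
    (continuous_const.mul (Real.continuous_exp.comp (by continuity))).continuousOn.integrableOn_Icc
  have hb : ∀ x ∈ Icc ℓ s, |Real.exp ((x ^ 2 - s ^ 2) / 2) * h x / x|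
      ≤ C * Real.exp (s * (x - s) / 2) := by
    intro x hx
    have hx1 : 1 ≤ x := le_trans hℓ hx.1
    have hx0 : 0 < x := by linarith
    have hxs : x ≤ s := hx.2
    rw [abs_div, abs_of_pos hx0, abs_mul, abs_of_pos (Real.exp_pos _), div_le_iff₀ hx0]
    calc Real.exp ((x ^ 2 - s ^ 2) / 2) * |h x|
        ≤ Real.exp (s * (x - s) / 2) * (C * x) := by
          refine mul_le_mul ?_ (hbh x hx.1) (abs_nonneg _) (Real.exp_pos _).le
          exact Real.exp_le_exp.2 (by nlinarith)
      _ = C * Real.exp (s * (x - s) / 2) * x := by ring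
  have key : |∫ ς in Icc ℓ s, Real.exp ((ς ^ 2 - s ^ 2) / 2) * h ς / ς| ≤ C * (2 / s) := by
    calc |∫ ς in Icc ℓ s, Real.exp ((ς ^ 2 - s ^ 2) / 2) * h ς / ς|
        ≤ ∫ x in Icc ℓ s, C * Real.exp (s * (x - s) / 2) := abs_int_Icc_le hf hg hb
      _ = C * ∫ x in Icc ℓ s, Real.exp (s * (x - s) / 2) := MeasureTheory.integral_const_mul _ _
      _ ≤ C * (2 / s) := mul_le_mul_of_nonneg_left (int_exp_Icc_le hs0 hs) hC
  have hsq : 0 < Real.sqrt s := Real.sqrt_pos.2 hs0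
  calc Real.sqrt s * |∫ ς in Icc ℓ s, Real.exp ((ς ^ 2 - s ^ 2) / 2) * h ς / ς|
      ≤ Real.sqrt s * (C * (2 / s)) := mul_le_mul_of_nonneg_left key (Real.sqrt_nonneg _)
    _ = 2 * C / Real.sqrt s := by
        rw [eq_div_iff hsq.ne']
        have hss : Real.sqrt s * Real.sqrt s = s := Real.mul_self_sqrt hs0.le
        field_simp [hs0.ne']
        linear_combination C * hss
    _ ≤ 2 * C / Real.sqrt ℓ := by
        gcongr

private lemma aux_iii {ℓ C s : ℝ} (hℓ : 1 ≤ ℓ) (hC : 0 ≤ C) (hs : ℓ ≤ s)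
    {h : ℝ → ℝ} (hch : ContinuousOn h (Ici ℓ))
    (hbh : ∀ t, ℓ ≤ t → |h t| ≤ C * t) :
    Real.sqrt s * |∫ ς in Ici s, Real.exp ((s ^ 2 - ς ^ 2) / 2) * h ς / ς|
      ≤ C / Real.sqrt ℓ := by
  have hℓ0 : (0:ℝ) < ℓ := by linarith
  have hs0 : (0:ℝ) < s := by linarith
  have hsub : Ici s ⊆ Ici ℓ := Ici_subset_Ici.2 hs
  have hne : ∀ x ∈ Ici s, x ≠ 0 := fun x hx => by
    have : s ≤ x := hx; intro hh; rw [hh] at this; linarith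
  have hfc : ContinuousOn (fun ς => Real.exp ((s ^ 2 - ς ^ 2) / 2) * h ς / ς) (Ici s) :=
    ((Real.continuous_exp.comp (by continuity)).continuousOn.mul (hch.mono hsub)).div
      continuousOn_id hne
  have hfm : AEStronglyMeasurable (fun ς => Real.exp ((s ^ 2 - ς ^ 2) / 2) * h ς / ς)
      (volume.restrict (Ici s)) := hfc.aestronglyMeasurable measurableSet_Ici
  have hg : IntegrableOn (fun x : ℝ => C * Real.exp (-(s * (x - s)))) (Ici s) := by
    rw [integrableOn_Ici_iff_integrableOn_Ioi]
    have hbase : IntegrableOn (fun x => Real.exp (-(s * (x - s)))) (Ioi s) := by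
      have hh := (exp_neg_integrableOn_Ioi s hs0).const_mul (Real.exp (s * s))
      refine hh.congr ((MeasureTheory.ae_restrict_mem measurableSet_Ioi).mono (fun x _ => ?_))
      show Real.exp (s * s) * Real.exp (-s * x) = Real.exp (-(s * (x - s)))
      rw [← Real.exp_add]; ring_nf
    exact hbase.const_mul C
  have hb : ∀ x ∈ Ici s, |Real.exp ((s ^ 2 - x ^ 2) / 2) * h x / x|
      ≤ C * Real.exp (-(s * (x - s))) := by
    intro x hx
    have hsx : s ≤ x := hx
    have hx1 : 1 ≤ x := by linarith
    have hx0 : 0 < x := by linarith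
    rw [abs_div, abs_of_pos hx0, abs_mul, abs_of_pos (Real.exp_pos _), div_le_iff₀ hx0]
    calc Real.exp ((s ^ 2 - x ^ 2) / 2) * |h x|
        ≤ Real.exp (-(s * (x - s))) * (C * x) := by
          refine mul_le_mul ?_ (hbh x (le_trans hs hsx)) (abs_nonneg _) (Real.exp_pos _).le
          exact Real.exp_le_exp.2 (by nlinarith)
      _ = C * Real.exp (-(s * (x - s))) * x := by ring
  have key : |∫ ς in Ici s, Real.exp ((s ^ 2 - ς ^ 2) / 2) * h ς / ς| ≤ C * (1 / s) := by
    calc |∫ ς in Ici s, Real.exp ((s ^ 2 - ς ^ 2) / 2) * h ς / ς|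
        ≤ ∫ x in Ici s, C * Real.exp (-(s * (x - s))) := abs_int_Ici_le hfm hg hb
      _ = C * ∫ x in Ici s, Real.exp (-(s * (x - s))) := MeasureTheory.integral_const_mul _ _
      _ = C * (1 / s) := by rw [int_exp_Ici hs0]
  calc Real.sqrt s * |∫ ς in Ici s, Real.exp ((s ^ 2 - ς ^ 2) / 2) * h ς / ς|
      ≤ Real.sqrt s * (C * (1 / s)) := mul_le_mul_of_nonneg_left key (Real.sqrt_nonneg _)
    _ = C / Real.sqrt s := by
        have hsq : (0:ℝ) < Real.sqrt s := Real.sqrt_pos.2 hs0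
        rw [eq_div_iff hsq.ne']
        have hss : Real.sqrt s * Real.sqrt s = s := Real.mul_self_sqrt hs0.le
        field_simp [hs0.ne']
        linear_combination C * hss
    _ ≤ C / Real.sqrt ℓ := by
        gcongr

private lemma aux_iv {ℓ C s : ℝ} (hℓ : 1 ≤ ℓ) (hC : 0 ≤ C) (hs : ℓ ≤ s)
    {f : ℝ → ℝ} (hcf : ContinuousOn f (Ici ℓ))
    (hbf : ∀ t, ℓ ≤ t → |f t| ≤ C * t ^ (-(1:ℝ)/2)) :
    |∫ ς in Icc ℓ s, f ς / ς ^ 2| ≤ (2/3) * C * ℓ ^ (-(3:ℝ)/2) := by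
  have hℓ0 : (0:ℝ) < ℓ := by linarith
  have hsub : Icc ℓ s ⊆ Ici ℓ := Icc_subset_Ici_self
  have hne : ∀ x ∈ Icc ℓ s, x ≠ 0 := fun x hx => by
    have := hx.1; intro hh; rw [hh] at this; linarith
  have hne2 : ∀ x ∈ Icc ℓ s, (x:ℝ) ^ 2 ≠ 0 := fun x hx => pow_ne_zero 2 (hne x hx)
  have hf : IntegrableOn (fun ς => f ς / ς ^ 2) (Icc ℓ s) :=
    ((hcf.mono hsub).div (continuousOn_id.pow 2) hne2).integrableOn_Icc
  have hg : IntegrableOn (fun x : ℝ => C * x ^ (-(5:ℝ)/2)) (Icc ℓ s) :=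
    (continuousOn_const.mul
      (continuousOn_id.rpow_const (fun x hx => Or.inl (hne x hx)))).integrableOn_Icc
  have hb : ∀ x ∈ Icc ℓ s, |f x / x ^ 2| ≤ C * x ^ (-(5:ℝ)/2) := by
    intro x hx
    have hx1 : 1 ≤ x := le_trans hℓ hx.1
    have hx0 : 0 < x := by linarith
    have hx2 : (0:ℝ) < x ^ 2 := by positivity
    rw [abs_div, abs_of_pos hx2, div_le_iff₀ hx2]
    calc |f x| ≤ C * x ^ (-(1:ℝ)/2) := hbf x hx.1
      _ = C * x ^ (-(5:ℝ)/2) * x ^ 2 := by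
          rw [mul_assoc, ← Real.rpow_natCast x 2, ← Real.rpow_add hx0]
          norm_num
  calc |∫ ς in Icc ℓ s, f ς / ς ^ 2| ≤ ∫ x in Icc ℓ s, C * x ^ (-(5:ℝ)/2) :=
        abs_int_Icc_le hf hg hb
    _ = C * ∫ x in Icc ℓ s, x ^ (-(5:ℝ)/2) := MeasureTheory.integral_const_mul _ _
    _ ≤ C * (ℓ ^ ((-(5:ℝ)/2) + 1) / (-((-(5:ℝ)/2) + 1))) :=
        mul_le_mul_of_nonneg_left (int_rpow_le hℓ0 hs (by norm_num)) hC
    _ = (2/3) * C * ℓ ^ (-(3:ℝ)/2) := by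
        have h1 : (-(5:ℝ)/2) + 1 = -(3:ℝ)/2 := by norm_num
        rw [h1]
        ring

private lemma comb_bound {ℓ M : ℝ} (hℓ : 1 ≤ ℓ) (hM : 0 ≤ M) {n : ℝ} (hn : 2 ≤ n)
    {δξ δy δγ : ℝ → ℝ}
    (hbξ : ∀ t, ℓ ≤ t → |δξ t| ≤ M)
    (hby : ∀ t, ℓ ≤ t → |δy t| ≤ M * t ^ (-(1:ℝ)/2))
    (hbγ : ∀ t, ℓ ≤ t → |δγ t| ≤ M * t) :
    ∀ t, ℓ ≤ t → |δξ t - (n - 1) * δy t + δγ t| ≤ ((n + 1) * M) * t := by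
  intro t ht
  have ht1 : 1 ≤ t := le_trans hℓ ht
  have ht0 : 0 < t := by linarith
  have h1 : |δξ t - (n - 1) * δy t + δγ t| ≤ |δξ t| + (n - 1) * |δy t| + |δγ t| := by
    calc |δξ t - (n - 1) * δy t + δγ t| ≤ |δξ t - (n - 1) * δy t| + |δγ t| := abs_add_le _ _
      _ ≤ |δξ t| + |(n - 1) * δy t| + |δγ t| := by
          have := abs_sub (δξ t) ((n - 1) * δy t)
          linarith
      _ = |δξ t| + (n - 1) * |δy t| + |δγ t| := by
          rw [abs_mul, abs_of_nonneg (by linarith : (0:ℝ) ≤ n - 1)]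
  have h2 : t ^ (-(1:ℝ)/2) ≤ 1 := Real.rpow_le_one_of_one_le_of_nonpos ht1 (by norm_num)
  have h3 : (0:ℝ) ≤ t ^ (-(1:ℝ)/2) := Real.rpow_nonneg ht0.le _
  have h4 := hbξ t ht
  have h5 := hby t ht
  have h6 := hbγ t ht
  have h7 : (n - 1) * |δy t| ≤ (n - 1) * M := by
    calc (n - 1) * |δy t| ≤ (n - 1) * (M * t ^ (-(1:ℝ)/2)) := by nlinarith
      _ ≤ (n - 1) * (M * 1) := by
          nlinarith [mul_nonneg (mul_nonneg (by linarith : (0:ℝ) ≤ n - 1) hM)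
            (by linarith : (0:ℝ) ≤ 1 - t ^ (-(1:ℝ)/2))]
      _ = (n - 1) * M := by ring
  nlinarith [mul_nonneg (mul_nonneg hM (by linarith : (0:ℝ) ≤ n)) (by linarith : (0:ℝ) ≤ t - 1)]



/-- Estimates for the components of the Fréchet derivative of the
conical-end fixed-point maps: if `|δξ_α| ≤ M`, `|δy_α| ≤ M s^{-1/2}`, `|δγ| ≤ M s`
on `[ℓ,∞)` with `ℓ ≥ 1`, then the four integral operators satisfy the stated bounds;
in particular all of them are bounded by `4nM/√ℓ` in the appropriate weighted norms. -/
theorem frechet_derivative_operator_bounds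
    (p₁ p₂ : ℤ) (hp₁ : 2 ≤ p₁) (hp₂ : 2 ≤ p₂)
    (n : ℤ) (hn : n = p₁ + p₂) (hn2 : 2 ≤ n)
    (ℓ M : ℝ) (hℓ : 1 ≤ ℓ) (hM : 0 ≤ M)
    (δξ₁ δξ₂ δy₁ δy₂ δγ : ℝ → ℝ)
    (hcξ₁ : ContinuousOn δξ₁ (Set.Ici ℓ)) (hcξ₂ : ContinuousOn δξ₂ (Set.Ici ℓ))
    (hcy₁ : ContinuousOn δy₁ (Set.Ici ℓ)) (hcy₂ : ContinuousOn δy₂ (Set.Ici ℓ))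
    (hcγ : ContinuousOn δγ (Set.Ici ℓ))
    (hbξ₁ : ∀ s, ℓ ≤ s → |δξ₁ s| ≤ M) (hbξ₂ : ∀ s, ℓ ≤ s → |δξ₂ s| ≤ M)
    (hby₁ : ∀ s, ℓ ≤ s → |δy₁ s| ≤ M * s ^ (-(1:ℝ)/2))
    (hby₂ : ∀ s, ℓ ≤ s → |δy₂ s| ≤ M * s ^ (-(1:ℝ)/2))
    (hbγ : ∀ s, ℓ ≤ s → |δγ s| ≤ M * s) :
    (∀ s, ℓ ≤ s →
      (|2 * ((n : ℝ) - 1) * ∫ ς in Set.Icc ℓ s, δy₁ ς / ς| ≤ 4 * ((n : ℝ) - 1) * M / Real.sqrt ℓ ∧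
       |2 * ((n : ℝ) - 1) * ∫ ς in Set.Icc ℓ s, δy₂ ς / ς| ≤ 4 * ((n : ℝ) - 1) * M / Real.sqrt ℓ) ∧
      (Real.sqrt s * |∫ ς in Set.Icc ℓ s,
          Real.exp ((ς ^ 2 - s ^ 2) / 2) * (δξ₁ ς - ((n : ℝ) - 1) * δy₁ ς + δγ ς) / ς|
        ≤ 2 * ((n : ℝ) + 1) * M / Real.sqrt ℓ ∧
       Real.sqrt s * |∫ ς in Set.Icc ℓ s,
          Real.exp ((ς ^ 2 - s ^ 2) / 2) * (δξ₂ ς - ((n : ℝ) - 1) * δy₂ ς + δγ ς) / ς|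
        ≤ 2 * ((n : ℝ) + 1) * M / Real.sqrt ℓ) ∧
      (Real.sqrt s * |∫ ς in Set.Ici s,
          Real.exp ((s ^ 2 - ς ^ 2) / 2) * (δξ₁ ς - ((n : ℝ) - 1) * δy₁ ς + δγ ς) / ς|
        ≤ ((n : ℝ) + 1) * M / Real.sqrt ℓ ∧
       Real.sqrt s * |∫ ς in Set.Ici s,
          Real.exp ((s ^ 2 - ς ^ 2) / 2) * (δξ₂ ς - ((n : ℝ) - 1) * δy₂ ς + δγ ς) / ς|
        ≤ ((n : ℝ) + 1) * M / Real.sqrt ℓ) ∧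
      ((1 / s) * |2 * s * ∫ ς in Set.Icc ℓ s, ((p₁ : ℝ) * δy₁ ς + (p₂ : ℝ) * δy₂ ς) / ς ^ 2|
        ≤ (4 * (n : ℝ) / 3) * M / (ℓ * Real.sqrt ℓ))) ∧
    (4 * ((n : ℝ) - 1) * M / Real.sqrt ℓ ≤ 4 * (n : ℝ) * M / Real.sqrt ℓ ∧
     2 * ((n : ℝ) + 1) * M / Real.sqrt ℓ ≤ 4 * (n : ℝ) * M / Real.sqrt ℓ ∧
     ((n : ℝ) + 1) * M / Real.sqrt ℓ ≤ 4 * (n : ℝ) * M / Real.sqrt ℓ ∧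
     (4 * (n : ℝ) / 3) * M / (ℓ * Real.sqrt ℓ) ≤ 4 * (n : ℝ) * M / Real.sqrt ℓ) := by
  
  have hnR : (2:ℝ) ≤ (n:ℝ) := by exact_mod_cast hn2
  have hp₁R : (2:ℝ) ≤ (p₁:ℝ) := by exact_mod_cast hp₁
  have hp₂R : (2:ℝ) ≤ (p₂:ℝ) := by exact_mod_cast hp₂
  have hnpp : (n:ℝ) = (p₁:ℝ) + (p₂:ℝ) := by exact_mod_cast hn
  have hℓ0 : (0:ℝ) < ℓ := by linarith
  have hsq1 : (1:ℝ) ≤ Real.sqrt ℓ := by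
    rw [show (1:ℝ) = Real.sqrt 1 from Real.sqrt_one.symm]
    exact Real.sqrt_le_sqrt hℓ
  have hsq0 : (0:ℝ) < Real.sqrt ℓ := by linarith
  have hC : (0:ℝ) ≤ ((n:ℝ) + 1) * M := by nlinarith
  constructor
  · intro s hs
    have hs0 : (0:ℝ) < s := by linarith
    refine ⟨⟨?_, ?_⟩, ⟨?_, ?_⟩, ⟨?_, ?_⟩, ?_⟩
    · have h := aux_i hℓ hM hs hcy₁ hby₁
      rw [abs_mul, abs_of_nonneg (show (0:ℝ) ≤ 2 * ((n:ℝ) - 1) by linarith)]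
      calc 2 * ((n:ℝ) - 1) * |∫ ς in Icc ℓ s, δy₁ ς / ς|
          ≤ 2 * ((n:ℝ) - 1) * (2 * M / Real.sqrt ℓ) :=
            mul_le_mul_of_nonneg_left h (by linarith)
        _ = 4 * ((n:ℝ) - 1) * M / Real.sqrt ℓ := by ring
    · have h := aux_i hℓ hM hs hcy₂ hby₂
      rw [abs_mul, abs_of_nonneg (show (0:ℝ) ≤ 2 * ((n:ℝ) - 1) by linarith)]
      calc 2 * ((n:ℝ) - 1) * |∫ ς in Icc ℓ s, δy₂ ς / ς|
          ≤ 2 * ((n:ℝ) - 1) * (2 * M / Real.sqrt ℓ) :=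
            mul_le_mul_of_nonneg_left h (by linarith)
        _ = 4 * ((n:ℝ) - 1) * M / Real.sqrt ℓ := by ring
    · have h := aux_ii (h := fun ς => δξ₁ ς - ((n:ℝ) - 1) * δy₁ ς + δγ ς) hℓ hC hs
        ((hcξ₁.sub (continuousOn_const.mul hcy₁)).add hcγ)
        (comb_bound hℓ hM hnR hbξ₁ hby₁ hbγ)
      rw [show 2 * ((n:ℝ) + 1) * M / Real.sqrt ℓ = 2 * (((n:ℝ) + 1) * M) / Real.sqrt ℓ by ring]
      exact h
    · have h := aux_ii (h := fun ς => δξ₂ ς - ((n:ℝ) - 1) * δy₂ ς + δγ ς) hℓ hC hs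
        ((hcξ₂.sub (continuousOn_const.mul hcy₂)).add hcγ)
        (comb_bound hℓ hM hnR hbξ₂ hby₂ hbγ)
      rw [show 2 * ((n:ℝ) + 1) * M / Real.sqrt ℓ = 2 * (((n:ℝ) + 1) * M) / Real.sqrt ℓ by ring]
      exact h
    · exact aux_iii (h := fun ς => δξ₁ ς - ((n:ℝ) - 1) * δy₁ ς + δγ ς) hℓ hC hs
        ((hcξ₁.sub (continuousOn_const.mul hcy₁)).add hcγ)
        (comb_bound hℓ hM hnR hbξ₁ hby₁ hbγ)
    · exact aux_iii (h := fun ς => δξ₂ ς - ((n:ℝ) - 1) * δy₂ ς + δγ ς) hℓ hC hs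
        ((hcξ₂.sub (continuousOn_const.mul hcy₂)).add hcγ)
        (comb_bound hℓ hM hnR hbξ₂ hby₂ hbγ)
    · have hCn : (0:ℝ) ≤ (n:ℝ) * M := by nlinarith
      have hbf : ∀ t, ℓ ≤ t → |(p₁:ℝ) * δy₁ t + (p₂:ℝ) * δy₂ t| ≤ ((n:ℝ) * M) * t ^ (-(1:ℝ)/2) := by
        intro t ht
        have h3 : (0:ℝ) ≤ t ^ (-(1:ℝ)/2) := Real.rpow_nonneg (by linarith) _
        calc |(p₁:ℝ) * δy₁ t + (p₂:ℝ) * δy₂ t| ≤ |(p₁:ℝ) * δy₁ t| + |(p₂:ℝ) * δy₂ t| := abs_add_le _ _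
          _ = (p₁:ℝ) * |δy₁ t| + (p₂:ℝ) * |δy₂ t| := by
              rw [abs_mul, abs_mul, abs_of_nonneg (by linarith : (0:ℝ) ≤ (p₁:ℝ)),
                abs_of_nonneg (by linarith : (0:ℝ) ≤ (p₂:ℝ))]
          _ ≤ (p₁:ℝ) * (M * t ^ (-(1:ℝ)/2)) + (p₂:ℝ) * (M * t ^ (-(1:ℝ)/2)) := by
              have := hby₁ t ht
              have := hby₂ t ht
              have h1 : (p₁:ℝ) * |δy₁ t| ≤ (p₁:ℝ) * (M * t ^ (-(1:ℝ)/2)) :=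
                mul_le_mul_of_nonneg_left (hby₁ t ht) (by linarith)
              have h2 : (p₂:ℝ) * |δy₂ t| ≤ (p₂:ℝ) * (M * t ^ (-(1:ℝ)/2)) :=
                mul_le_mul_of_nonneg_left (hby₂ t ht) (by linarith)
              linarith
          _ = ((n:ℝ) * M) * t ^ (-(1:ℝ)/2) := by rw [hnpp]; ring
      have h := aux_iv (f := fun ς => (p₁:ℝ) * δy₁ ς + (p₂:ℝ) * δy₂ ς) hℓ hCn hs
        ((continuousOn_const.mul hcy₁).add (continuousOn_const.mul hcy₂)) hbf
      have hrpow : ℓ ^ (-(3:ℝ)/2) = 1 / (ℓ * Real.sqrt ℓ) := by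
        rw [show (-(3:ℝ)/2) = -((3:ℝ)/2) by norm_num, Real.rpow_neg hℓ0.le,
          show ((3:ℝ)/2) = 1 + 1/2 by norm_num, Real.rpow_add hℓ0, Real.rpow_one,
          ← Real.sqrt_eq_rpow, one_div]
      calc (1 / s) * |2 * s * ∫ ς in Icc ℓ s, ((p₁:ℝ) * δy₁ ς + (p₂:ℝ) * δy₂ ς) / ς ^ 2|
          = 2 * |∫ ς in Icc ℓ s, ((p₁:ℝ) * δy₁ ς + (p₂:ℝ) * δy₂ ς) / ς ^ 2| := by
            rw [abs_mul, abs_mul, abs_of_nonneg (by norm_num : (0:ℝ) ≤ (2:ℝ)),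
              abs_of_pos hs0]
            field_simp
        _ ≤ 2 * ((2/3) * ((n:ℝ) * M) * ℓ ^ (-(3:ℝ)/2)) := by linarith
        _ = (4 * (n:ℝ) / 3) * M / (ℓ * Real.sqrt ℓ) := by
            rw [hrpow]
            ring
  · have hℓsq0 : (0:ℝ) < ℓ * Real.sqrt ℓ := by positivity
    refine ⟨?_, ?_, ?_, ?_⟩
    · rw [div_le_div_iff₀ hsq0 hsq0]
      nlinarith [mul_nonneg hM hsq0.le]
    · rw [div_le_div_iff₀ hsq0 hsq0]
      nlinarith [mul_nonneg hM hsq0.le]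
    · rw [div_le_div_iff₀ hsq0 hsq0]
      nlinarith [mul_nonneg hM hsq0.le]
    · rw [div_le_div_iff₀ hℓsq0 hsq0]
      have ha : (0:ℝ) ≤ (n:ℝ) * M * Real.sqrt ℓ := by positivity
      nlinarith [mul_nonneg ha (by linarith : (0:ℝ) ≤ ℓ - 1), ha]
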